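/- Let X be a topological space in which every point has a compact Hausdorff neighborhood. Then for every point x ∈ X and every neighborhood V of x, there exists a compact Hausdorff neighborhood U of x with U ⊆ V (i.e., X is microcompact). -/
import Mathlib


theorem microcompact_of_locallyCompactHausdorff
    {X : Type*} [TopologicalSpace X]
    (hloc : ∀ x : X, ∃ K ∈ nhds x, IsCompact K ∧ T2Space K) :
    ∀ x : X, ∀ V ∈ nhds x, ∃ U ∈ nhds x, U ⊆ V ∧ IsCompact U ∧ T2Space U := by
  intro x V hV
  obtain ⟨K, hK, hKc, hKt2⟩ := hloc x
  have hxK : x ∈ K := mem_of_mem_nhds hK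
  haveI : CompactSpace K := isCompact_iff_compactSpace.1 hKc
  haveI : LocallyCompactSpace K := inferInstance
  set x' : K := ⟨x, hxK⟩
  have hN : (Subtype.val ⁻¹' V : Set K) ∈ nhds x' :=
    continuous_subtype_val.continuousAt.preimage_mem_nhds hV
  obtain ⟨U', hU'n, hU'sub, hU'c⟩ := local_compact_nhds hN
  refine ⟨Subtype.val '' U', ?_, ?_, hU'c.image continuous_subtype_val, ?_⟩
  · have : Subtype.val '' U' ∈ nhdsWithin x K := by
      rw [← map_nhds_subtype_val x']
      exact Filter.image_mem_map hU'n
    rwa [nhdsWithin_eq_nhds.2 hK] at this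
  · rintro _ ⟨y, hy, rfl⟩
    exact hU'sub hy
  · have hsub : Subtype.val '' U' ⊆ K := by rintro _ ⟨y, _, rfl⟩; exact y.2
    exact (Topology.IsEmbedding.inclusion hsub).t2Space
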